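/- Let (X, d) be a complete separable metric space whose topology is zero-dimensional (the clopen sets form a basis for the topology) and such that d(x, y) ≤ 1 for all x, y ∈ X. Then there exists a family (A_s) of subsets of X indexed by finite sequences s of natural numbers such that: (1) each A_s is clopen; (2) A_∅ = X where ∅ is the empty sequence; (3) for every s, A_s is the union over n ∈ ℕ of the sets A_{s⌢n} (where s⌢n denotes s extended by n); (4) for every s and all n ≠ m, A_{s⌢n} ∩ A_{s⌢m} = ∅; and (5) for every nonempty sequence s, the diameter of A_s is at most 2^{-length(s)}. -/

import Mathlib

open Metric TopologicalSpace Set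

lemma clopen_partition {X : Type*} [MetricSpace X]
    [TopologicalSpace.SeparableSpace X]
    (hzd : TopologicalSpace.IsTopologicalBasis {U : Set X | IsClopen U})
    (B : Set X) (hB : IsClopen B) (ε : ℝ) (hε : 0 < ε) :
    ∃ f : ℕ → Set X, (∀ n, IsClopen (f n)) ∧ (⋃ n, f n) = B ∧
      Pairwise (Function.onFun Disjoint f) ∧ ∀ n, Metric.diam (f n) ≤ ε := by
  haveI : SecondCountableTopology X := UniformSpace.secondCountable_of_separable X
  rcases B.eq_empty_or_nonempty with hBe | hBne
  · exact ⟨fun _ => ∅, fun _ => isClopen_empty, by simp [hBe],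
      fun n m _ => by simp [Function.onFun], fun n => by simp [hε.le]⟩
  have hcov : ∀ x ∈ B, ∃ U : Set X, IsClopen U ∧ x ∈ U ∧ U ⊆ B ∧ Bornology.IsBounded U ∧ Metric.diam U ≤ ε := by
    intro x hx
    have hmem : x ∈ B ∩ ball x (ε / 2) := ⟨hx, mem_ball_self (by linarith)⟩
    obtain ⟨U, hU, hxU, hUsub⟩ := hzd.exists_subset_of_mem_open hmem
      (hB.isOpen.inter isOpen_ball)
    refine ⟨U, hU, hxU, fun y hy => (hUsub hy).1, ?_, ?_⟩
    · exact isBounded_ball.subset (fun y hy => (hUsub hy).2)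
    calc Metric.diam U ≤ Metric.diam (ball x (ε / 2)) :=
          Metric.diam_mono (fun y hy => (hUsub hy).2) isBounded_ball
      _ ≤ 2 * (ε / 2) := Metric.diam_ball (by linarith)
      _ = ε := by ring
  choose! U hU1 hU2 hU3 hU4 hU5 using hcov
  have cover : ⋃ x : B, U x = B := by
    apply subset_antisymm
    · exact iUnion_subset fun x => hU3 x x.2
    · intro y hy
      exact mem_iUnion.2 ⟨⟨y, hy⟩, hU2 y hy⟩
  obtain ⟨T, hTc, hTu⟩ := TopologicalSpace.isOpen_iUnion_countable (fun x : B => U x)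
    (fun x => (hU1 x x.2).isOpen)
  have hTne : T.Nonempty := by
    rcases hBne with ⟨y, hy⟩
    by_contra h
    rw [Set.not_nonempty_iff_eq_empty] at h
    rw [h] at hTu
    simp only [Set.mem_empty_iff_false, Set.iUnion_of_empty, Set.iUnion_empty] at hTu
    rw [cover] at hTu
    exact absurd (hTu ▸ hy) (Set.notMem_empty y)
  obtain ⟨e, he⟩ := Set.Countable.exists_eq_range hTc hTne
  set g : ℕ → Set X := fun n => U (e n) with hg
  have hgclopen : ∀ n, IsClopen (g n) := fun n => hU1 _ (e n).2
  have hgunion : (⋃ n, g n) = B := by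
    rw [← cover, ← hTu, he]
    ext y
    simp [g]
  have hpclopen : ∀ n, IsClopen (partialSups g n) := by
    intro n
    induction n with
    | zero => simpa using hgclopen 0
    | succ n ih => rw [← Order.succ_eq_add_one, partialSups_succ]; exact ih.union (hgclopen (n + 1))
  refine ⟨disjointed g, ?_, ?_, disjoint_disjointed g, ?_⟩
  · intro n
    cases n with
    | zero => simpa [disjointed_zero] using hgclopen 0
    | succ n => rw [disjointed_add_one]; exact (hgclopen (n + 1)).diff (hpclopen n)
  · rw [← hgunion]
    exact iSup_disjointed g
  · intro n
    exact le_trans (Metric.diam_mono (disjointed_le g n) (hU4 _ (e n).2)) (hU5 _ (e n).2)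

/-- A Lusin-scheme decomposition of a zero-dimensional complete separable metric space
with distances bounded by 1: there is a family of clopen sets `A s`, indexed by finite
sequences `s` of naturals, with `A [] = X`, each `A s` partitioned into the `A (s ++ [n])`,
and `diam (A s) ≤ 2 ^ (-length s)` for nonempty `s`. -/
theorem stmt5 {X : Type*} [MetricSpace X] [CompleteSpace X]
    [TopologicalSpace.SeparableSpace X]
    (hzd : TopologicalSpace.IsTopologicalBasis {U : Set X | IsClopen U})
    (hbd : ∀ x y : X, dist x y ≤ 1) :
    ∃ A : List ℕ → Set X,
      (∀ s, IsClopen (A s)) ∧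
      A [] = Set.univ ∧
      (∀ s, A s = ⋃ n : ℕ, A (s ++ [n])) ∧
      (∀ s, ∀ n m : ℕ, n ≠ m → A (s ++ [n]) ∩ A (s ++ [m]) = ∅) ∧
      (∀ s : List ℕ, s ≠ [] → Metric.diam (A s) ≤ (1 / 2 : ℝ) ^ s.length) := by
  have key : ∀ B : Set X, IsClopen B → ∀ k : ℕ,
      ∃ f : ℕ → Set X, (∀ n, IsClopen (f n)) ∧ (⋃ n, f n) = B ∧
        Pairwise (Function.onFun Disjoint f) ∧ ∀ n, Metric.diam (f n) ≤ (1 / 2 : ℝ) ^ k :=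
    fun B hB k => clopen_partition hzd B hB _ (by positivity)
  choose F h1 h2 h3 h4 using key
  -- define recursively on reversed lists
  let G : List ℕ → {S : Set X // IsClopen S} := fun s =>
    s.rec ⟨Set.univ, isClopen_univ⟩
      (fun n t ih => ⟨F ih.1 ih.2 (t.length + 1) n, h1 ih.1 ih.2 (t.length + 1) n⟩)
  have hGcons : ∀ (n : ℕ) (t : List ℕ),
      (G (n :: t)).1 = F (G t).1 (G t).2 (t.length + 1) n := fun n t => rfl
  refine ⟨fun s => (G s.reverse).1, fun s => (G s.reverse).2, rfl, ?_, ?_, ?_⟩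
  · intro s
    have hrev : ∀ k : ℕ, (s ++ [k]).reverse = k :: s.reverse := fun k => by simp
    show (G s.reverse).1 = ⋃ n, (G (s ++ [n]).reverse).1
    have h := h2 (G s.reverse).1 (G s.reverse).2 (s.reverse.length + 1)
    rw [← h]
    refine Set.iUnion_congr fun n => ?_
    rw [hrev, hGcons]
  · intro s n m hnm
    have hrev : ∀ k : ℕ, (s ++ [k]).reverse = k :: s.reverse := fun k => by simp
    have hd := h3 (G s.reverse).1 (G s.reverse).2 (s.reverse.length + 1) hnm
    show (G (s ++ [n]).reverse).1 ∩ (G (s ++ [m]).reverse).1 = ∅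
    rw [hrev, hrev, hGcons, hGcons]
    exact Set.disjoint_iff_inter_eq_empty.mp hd
  · intro s hs
    show Metric.diam (G s.reverse).1 ≤ (1 / 2 : ℝ) ^ s.length
    rcases hsr : s.reverse with _ | ⟨n, t⟩
    · exact absurd (by simpa using congrArg List.reverse hsr) hs
    · have hlen : s.length = t.length + 1 := by
        have := congrArg List.length hsr
        simpa using this
      rw [hlen, hGcons]
      exact h4 (G t).1 (G t).2 (t.length + 1) n
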